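/- Let A be an n×n real matrix and let L_A be the homological operator on vector-valued polynomial maps defined by (L_A f)(y) = Df(y)·(Ay) − A f(y). Then with respect to the inner product ⟨p, q⟩ = Σ_m m! ⟨p_m, q_m⟩ (extended componentwise to vector polynomials), the adjoint of L_A equals L_{A*}, i.e., ⟨L_A p, q⟩ = ⟨p, L_{A*} q⟩ for all homogeneous vector polynomials p, q of degree k. -/

import Mathlib

open MvPolynomial Matrix

/-- The inner product ⟨p,q⟩ = Σ_m m! p_m q_m on real polynomials in n variables. -/
noncomputable def polyInner {n : ℕ} (p q : MvPolynomial (Fin n) ℝ) : ℝ :=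
  ∑ m ∈ p.support ∪ q.support,
    (∏ i, ((m i).factorial : ℝ)) * p.coeff m * q.coeff m

/-- The componentwise inner product on vector-valued polynomials. -/
noncomputable def vecInner {n : ℕ} (p q : Fin n → MvPolynomial (Fin n) ℝ) : ℝ :=
  ∑ i, polyInner (p i) (q i)

/-- The homological operator (L_A f)(y) = Df(y)·(Ay) − A f(y), on polynomial
vector fields written in coordinates. -/
noncomputable def LieOp {n : ℕ} (A : Matrix (Fin n) (Fin n) ℝ)
    (f : Fin n → MvPolynomial (Fin n) ℝ) : Fin n → MvPolynomial (Fin n) ℝ :=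
  fun i => (∑ j, pderiv j (f i) * ∑ l, C (A j l) * X l) - ∑ j, C (A i j) * f j

/-! ### Auxiliary lemmas -/

lemma polyInner_eq_sum {n : ℕ} (p q : MvPolynomial (Fin n) ℝ) (S : Finset ((Fin n) →₀ ℕ))
    (h : ∀ m, p.coeff m ≠ 0 → q.coeff m ≠ 0 → m ∈ S) :
    polyInner p q = ∑ m ∈ S, (∏ i, ((m i).factorial : ℝ)) * p.coeff m * q.coeff m := by
  unfold polyInner
  have e1 : ∑ m ∈ p.support ∪ q.support, (∏ i, ((m i).factorial : ℝ)) * p.coeff m * q.coeff m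
      = ∑ m ∈ (p.support ∪ q.support) ∪ S,
        (∏ i, ((m i).factorial : ℝ)) * p.coeff m * q.coeff m := by
    apply Finset.sum_subset Finset.subset_union_left
    intro m _ hm
    have hz : p.coeff m = 0 := by
      by_contra hc
      exact hm (Finset.mem_union_left _ (mem_support_iff.2 hc))
    simp [hz]
  have e2 : ∑ m ∈ S, (∏ i, ((m i).factorial : ℝ)) * p.coeff m * q.coeff m
      = ∑ m ∈ (p.support ∪ q.support) ∪ S,
        (∏ i, ((m i).factorial : ℝ)) * p.coeff m * q.coeff m := by
    apply Finset.sum_subset Finset.subset_union_right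
    intro m _ hm
    by_cases hp : p.coeff m = 0
    · simp [hp]
    by_cases hq : q.coeff m = 0
    · simp [hq]
    exact absurd (h m hp hq) hm
  rw [e1, ← e2]

lemma polyInner_comm {n : ℕ} (p q : MvPolynomial (Fin n) ℝ) :
    polyInner p q = polyInner q p := by
  unfold polyInner
  rw [Finset.union_comm]
  exact Finset.sum_congr rfl fun m _ => by ring

lemma polyInner_zero_left {n : ℕ} (q : MvPolynomial (Fin n) ℝ) :
    polyInner 0 q = 0 := by
  unfold polyInner; simp

lemma polyInner_add_left {n : ℕ} (p p' q : MvPolynomial (Fin n) ℝ) :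
    polyInner (p + p') q = polyInner p q + polyInner p' q := by
  have S := p.support ∪ p'.support ∪ q.support
  rw [polyInner_eq_sum (p + p') q (p.support ∪ p'.support ∪ q.support)
      (fun m hm _ => by
        by_contra hS
        have h1 : p.coeff m = 0 := by
          by_contra hc
          exact hS (Finset.mem_union_left _ (Finset.mem_union_left _ (mem_support_iff.2 hc)))
        have h2 : p'.coeff m = 0 := by
          by_contra hc
          exact hS (Finset.mem_union_left _ (Finset.mem_union_right _ (mem_support_iff.2 hc)))
        exact hm (by rw [coeff_add, h1, h2, add_zero])),
    polyInner_eq_sum p q (p.support ∪ p'.support ∪ q.support)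
      (fun m hm _ => Finset.mem_union_left _ (Finset.mem_union_left _ (mem_support_iff.2 hm))),
    polyInner_eq_sum p' q (p.support ∪ p'.support ∪ q.support)
      (fun m hm _ => Finset.mem_union_left _ (Finset.mem_union_right _ (mem_support_iff.2 hm))),
    ← Finset.sum_add_distrib]
  exact Finset.sum_congr rfl fun m _ => by rw [coeff_add]; ring

lemma polyInner_sub_left {n : ℕ} (p p' q : MvPolynomial (Fin n) ℝ) :
    polyInner (p - p') q = polyInner p q - polyInner p' q := by
  have h : polyInner (p - p' + p') q = polyInner (p - p') q + polyInner p' q :=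
    polyInner_add_left _ _ _
  rw [sub_add_cancel] at h
  linarith

lemma polyInner_Cmul_left {n : ℕ} (r : ℝ) (p q : MvPolynomial (Fin n) ℝ) :
    polyInner (C r * p) q = r * polyInner p q := by
  rw [polyInner_eq_sum (C r * p) q (p.support ∪ q.support)
      (fun m hm _ => by
        rw [coeff_C_mul] at hm
        exact Finset.mem_union_left _ (mem_support_iff.2 fun hc => hm (by rw [hc, mul_zero])))]
  unfold polyInner
  rw [Finset.mul_sum]
  exact Finset.sum_congr rfl fun m _ => by rw [coeff_C_mul]; ring

lemma polyInner_sum_left {n : ℕ} {ι : Type*} (s : Finset ι)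
    (f : ι → MvPolynomial (Fin n) ℝ) (q : MvPolynomial (Fin n) ℝ) :
    polyInner (∑ j ∈ s, f j) q = ∑ j ∈ s, polyInner (f j) q := by
  classical
  induction s using Finset.induction_on with
  | empty => simpa using polyInner_zero_left q
  | insert _ _ hj ih =>
    rw [Finset.sum_insert hj, Finset.sum_insert hj, polyInner_add_left, ih]

lemma coeff_pderiv {n : ℕ} (l : Fin n) (g : MvPolynomial (Fin n) ℝ) (m : (Fin n) →₀ ℕ) :
    coeff m (pderiv l g) = ((m l : ℝ) + 1) * coeff (m + Finsupp.single l 1) g := by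
  induction g using MvPolynomial.induction_on' with
  | add f g hf hg => rw [map_add, coeff_add, coeff_add, hf, hg]; ring
  | monomial a r =>
    rw [pderiv_monomial, coeff_monomial, coeff_monomial]
    by_cases h : a = m + Finsupp.single l 1
    · subst h
      rw [if_pos (by rw [add_tsub_cancel_right]), if_pos rfl]
      rw [Finsupp.add_apply, Finsupp.single_eq_same]
      push_cast
      ring
    · rw [if_neg h]
      by_cases h2 : a - Finsupp.single l 1 = m
      · rw [if_pos h2]
        have hal : a l = 0 := by
          by_contra hal
          apply h
          rw [← h2, tsub_add_cancel_of_le (Finsupp.single_le_iff.2 (Nat.one_le_iff_ne_zero.2 hal))]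
        rw [hal]
        push_cast
        ring
      · rw [if_neg h2, mul_zero]

lemma fact_prod_succ {n : ℕ} (m : (Fin n) →₀ ℕ) (l : Fin n) :
    (∏ i : Fin n, ((((m + Finsupp.single l 1) : (Fin n) →₀ ℕ) i).factorial : ℝ))
      = ((m l : ℝ) + 1) * ∏ i : Fin n, ((m i).factorial : ℝ) := by
  have h1 : ∀ f : Fin n → ℝ, ∏ i, f i = f l * ∏ i ∈ Finset.univ.erase l, f i := fun f =>
    (Finset.mul_prod_erase _ f (Finset.mem_univ l)).symm
  rw [h1 (fun i => ((((m + Finsupp.single l 1) : (Fin n) →₀ ℕ) i).factorial : ℝ)),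
      h1 (fun i => ((m i).factorial : ℝ)), ← mul_assoc]
  congr 1
  · rw [Finsupp.add_apply, Finsupp.single_eq_same, Nat.factorial_succ]
    push_cast
    ring
  · apply Finset.prod_congr rfl
    intro i hi
    rw [Finsupp.add_apply, Finsupp.single_apply,
      if_neg (Ne.symm (Finset.mem_erase.1 hi).1), add_zero]

lemma polyInner_mul_X {n : ℕ} (f g : MvPolynomial (Fin n) ℝ) (l : Fin n) :
    polyInner (f * X l) g = polyInner f (pderiv l g) := by
  classical
  rw [polyInner_eq_sum (f * X l) g
      ((f.support ∪ (pderiv l g).support).image (· + Finsupp.single l 1))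
      (by
        intro m hm1 _
        rw [coeff_mul_X'] at hm1
        by_cases hl : l ∈ m.support
        · rw [if_pos hl] at hm1
          refine Finset.mem_image.2 ⟨m - Finsupp.single l 1,
            Finset.mem_union_left _ (mem_support_iff.2 hm1), ?_⟩
          exact tsub_add_cancel_of_le
            (Finsupp.single_le_iff.2 (Nat.one_le_iff_ne_zero.2 (Finsupp.mem_support_iff.1 hl)))
        · rw [if_neg hl] at hm1
          exact absurd rfl hm1),
    Finset.sum_image (fun a _ b _ h => by
      have := congrArg (fun x => x - Finsupp.single l 1) h
      simpa [add_tsub_cancel_right] using this)]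
  unfold polyInner
  apply Finset.sum_congr rfl
  intro m _
  rw [coeff_mul_X, coeff_pderiv, fact_prod_succ]
  ring

theorem lieOp_adjoint {n k : ℕ} (A : Matrix (Fin n) (Fin n) ℝ)
    (p q : Fin n → MvPolynomial (Fin n) ℝ)
    (hp : ∀ i, (p i).IsHomogeneous k) (hq : ∀ i, (q i).IsHomogeneous k) :
    vecInner (LieOp A p) q = vecInner p (LieOp Aᵀ q) := by
  classical
  have key : ∀ (B : Matrix (Fin n) (Fin n) ℝ) (u v : Fin n → MvPolynomial (Fin n) ℝ),
      vecInner (LieOp B u) v =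
        (∑ i, ∑ j, ∑ l, B j l * polyInner (pderiv j (u i)) (pderiv l (v i)))
          - ∑ i, ∑ j, B i j * polyInner (u j) (v i) := by
    intro B u v
    unfold vecInner LieOp
    rw [← Finset.sum_sub_distrib]
    apply Finset.sum_congr rfl
    intro i _
    rw [polyInner_sub_left, polyInner_sum_left, polyInner_sum_left]
    congr 1
    · apply Finset.sum_congr rfl
      intro j _
      rw [Finset.mul_sum]
      have hterm : ∀ l : Fin n, pderiv j (u i) * (C (B j l) * X l)
          = C (B j l) * (pderiv j (u i) * X l) := fun l => by ring
      simp_rw [hterm]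
      rw [polyInner_sum_left]
      apply Finset.sum_congr rfl
      intro l _
      rw [polyInner_Cmul_left, polyInner_mul_X]
    · exact Finset.sum_congr rfl fun j _ => polyInner_Cmul_left _ _ _
  have hcomm : vecInner p (LieOp Aᵀ q) = vecInner (LieOp Aᵀ q) p := by
    unfold vecInner
    exact Finset.sum_congr rfl fun i _ => polyInner_comm _ _
  rw [key A p q, hcomm, key Aᵀ q p]
  congr 1
  · apply Finset.sum_congr rfl
    intro i _
    conv_rhs => rw [Finset.sum_comm]
    apply Finset.sum_congr rfl
    intro j _
    apply Finset.sum_congr rfl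
    intro l _
    rw [transpose_apply, polyInner_comm]
  · conv_rhs => rw [Finset.sum_comm]
    apply Finset.sum_congr rfl
    intro i _
    apply Finset.sum_congr rfl
    intro j _
    rw [transpose_apply, polyInner_comm]
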